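/- The function μ(η̄) = (η̄ - η̄_T)(arctan(100(η̄ - η̄_T))/π + 1/2) - arctan(100)/π + 1/2 is nonnegative for all real η̄ whenever 0 ≤ η̄_T ≤ 1 and η̄ ≥ 0. -/

import Mathlib

open Real Set

lemma arctan_concaveOn : ConcaveOn ℝ (Set.Ici 0) Real.arctan := by
  have h : ∀ x ∈ interior (Set.Ici (0:ℝ)), deriv^[2] Real.arctan x < 0 := by
    intro x hx
    rw [interior_Ici] at hx
    have hx : (0:ℝ) < x := hx
    have hne : (1 + x ^ 2 : ℝ) ≠ 0 := by positivity
    have hd : HasDerivAt (fun y : ℝ => 1 / (1 + y ^ 2)) (-(2 * x) / (1 + x ^ 2) ^ 2) x := by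
      have h1 : HasDerivAt (fun y : ℝ => 1 + y ^ 2) (2 * x) x := by
        simpa using ((hasDerivAt_pow 2 x).const_add 1)
      simpa [one_div, Pi.inv_def] using h1.inv hne
    have : deriv^[2] Real.arctan x = -(2 * x) / (1 + x ^ 2) ^ 2 := by
      show deriv (deriv Real.arctan) x = _
      rw [Real.deriv_arctan]
      exact hd.deriv
    rw [this]
    have : (0:ℝ) < (1 + x ^ 2) ^ 2 := by positivity
    exact div_neg_of_neg_of_pos (by linarith) this
  exact (strictConcaveOn_of_deriv2_neg (convex_Ici 0)
    (Real.continuous_arctan.continuousOn) h).concaveOn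

lemma key_ineq {s u : ℝ} (hs0 : 0 ≤ s) (hs1 : s ≤ 1) (hu : 0 ≤ u) :
    s * Real.arctan u ≤ Real.arctan (s * u) := by
  have h := arctan_concaveOn.2 (x := u) hu (y := 0) (Set.mem_Ici.mpr le_rfl) hs0
    (by linarith : (0:ℝ) ≤ 1 - s) (by ring)
  simpa [Real.arctan_zero, smul_eq_mul] using h

theorem mu_nonneg (etaT : ℝ) (hT0 : 0 ≤ etaT) (hT1 : etaT ≤ 1)
    (x : ℝ) (hx : 0 ≤ x) :
    0 ≤ (x - etaT) * (Real.arctan (100 * (x - etaT)) / Real.pi + 1 / 2)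
        - Real.arctan 100 / Real.pi + 1 / 2 := by
  have hpi : (0:ℝ) < Real.pi := Real.pi_pos
  have h100 : Real.arctan 100 < Real.pi / 2 := Real.arctan_lt_pi_div_two 100
  rcases le_or_gt etaT x with h | h
  · -- x ≥ etaT : all terms nonneg
    have ht : 0 ≤ x - etaT := by linarith
    have ha : 0 ≤ Real.arctan (100 * (x - etaT)) := by
      rw [← Real.arctan_zero]
      exact Real.arctan_strictMono.monotone (by linarith)
    have h1 : 0 ≤ (x - etaT) * (Real.arctan (100 * (x - etaT)) / Real.pi + 1 / 2) := by
      have : 0 ≤ Real.arctan (100 * (x - etaT)) / Real.pi + 1 / 2 := by positivity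
      positivity
    have h2 : Real.arctan 100 / Real.pi < 1 / 2 := by
      rw [div_lt_iff₀ hpi]; linarith
    linarith
  · -- x < etaT
    set s := etaT - x with hs
    have hs0 : 0 < s := by linarith
    have hs1 : s ≤ 1 := by linarith
    have harc : Real.arctan (100 * (x - etaT)) = -Real.arctan (100 * s) := by
      rw [← Real.arctan_neg, hs]; ring_nf
    have hinv1 : Real.arctan (100 * s)⁻¹ = Real.pi / 2 - Real.arctan (100 * s) :=
      Real.arctan_inv_of_pos (by positivity)
    have hinv2 : Real.arctan (100:ℝ)⁻¹ = Real.pi / 2 - Real.arctan 100 :=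
      Real.arctan_inv_of_pos (by norm_num)
    have hkey : s * Real.arctan (100 * s)⁻¹ ≤ Real.arctan (s * (100 * s)⁻¹) :=
      key_ineq hs0.le hs1 (by positivity)
    have heq : s * (100 * s)⁻¹ = (100:ℝ)⁻¹ := by
      field_simp
    rw [heq] at hkey
    rw [hinv1, hinv2] at hkey
    -- hkey : s * (π/2 - arctan(100 s)) ≤ π/2 - arctan 100
    rw [harc]
    -- goal: 0 ≤ (x - etaT) * (-arctan(100 s)/π + 1/2) - arctan 100/π + 1/2
    have hxe : x - etaT = -s := by linarith
    rw [hxe]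
    have expand : -s * (-Real.arctan (100 * s) / Real.pi + 1 / 2) - Real.arctan 100 / Real.pi + 1 / 2
        = ((Real.pi / 2 - Real.arctan 100) - s * (Real.pi / 2 - Real.arctan (100 * s))) / Real.pi := by
      field_simp
      ring
    rw [expand]
    apply div_nonneg _ hpi.le
    linarith
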